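/- With the noise coefficients σ_k as defined (depending on N ≥ 1 and a_τ > 0), for every x ∈ ℝ² one has the matrix identity Σ_{k∈K} σ_k(x) ⊗ σ_k(x) = 2 α_N I, where α_N := (1/2) Σ_{k∈K_{++}, N≤|k|≤2N} a_τ²/|k|⁴ and I is the 2×2 identity matrix; moreover, for fixed a_τ, α_N → 0 as N → ∞. -/

import Mathlib

open Real Filter
open scoped Classical

noncomputable section

/-- Squared Euclidean norm of a lattice vector `k ∈ ℤ²`. -/
def knormSq (k : ℤ × ℤ) : ℝ := ((k.1 : ℝ)) ^ 2 + ((k.2 : ℝ)) ^ 2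

/-- Euclidean norm `|k|` of a lattice vector `k ∈ ℤ²`. -/
def knorm (k : ℤ × ℤ) : ℝ := Real.sqrt (knormSq k)

/-- The rotated vector `k^⊥ = (-k₂, k₁)`, as a vector of `ℝ²`. -/
def kperp (k : ℤ × ℤ) : Fin 2 → ℝ := ![-(k.2 : ℝ), (k.1 : ℝ)]

/-- Dot product `k·x` of a lattice vector with `x ∈ ℝ²`. -/
def kdot (k : ℤ × ℤ) (x : Fin 2 → ℝ) : ℝ := (k.1 : ℝ) * x 0 + (k.2 : ℝ) * x 1

/-- The dyadic annulus condition `N ≤ |k| ≤ 2N`. -/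
def inAnnulus (N : ℕ) (k : ℤ × ℤ) : Prop := (N : ℝ) ≤ knorm k ∧ knorm k ≤ 2 * N

/-- The noise amplitude `θ_k = a_τ/|k|²` on the annulus `N ≤ |k| ≤ 2N`, `0` elsewhere. -/
def θcoef (N : ℕ) (aτ : ℝ) (k : ℤ × ℤ) : ℝ :=
  if inAnnulus N k then aτ / knorm k ^ 2 else 0

/-- The half-lattice `K₊ = K_{++} ∪ K_{+-}`. -/
def KPlus (k : ℤ × ℤ) : Prop := (0 ≤ k.1 ∧ 0 < k.2) ∨ (0 < k.1 ∧ k.2 ≤ 0)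

/-- The half-lattice `K₋ = K_{-+} ∪ K_{--}`. -/
def KMinus (k : ℤ × ℤ) : Prop := (k.1 < 0 ∧ 0 ≤ k.2) ∨ (k.1 ≤ 0 ∧ k.2 < 0)

/-- The noise coefficients: `σ_k(x) = θ_k (k^⊥/|k|) cos(k·x)` for `k ∈ K₊`,
`σ_k(x) = θ_k (k^⊥/|k|) sin(k·x)` for `k ∈ K₋`, and `0` for `k = 0`. -/
def σcoef (N : ℕ) (aτ : ℝ) (k : ℤ × ℤ) (x : Fin 2 → ℝ) : Fin 2 → ℝ :=
  if KPlus k then (θcoef N aτ k * Real.cos (kdot k x) / knorm k) • kperp k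
  else if KMinus k then (θcoef N aτ k * Real.sin (kdot k x) / knorm k) • kperp k
  else 0

/-- A finite box of lattice points containing the annulus `N ≤ |k| ≤ 2N`; summing over
it realizes the (finite) sum over `k ∈ K`, since `θ_k` vanishes off the annulus. -/
def latticeBox (N : ℕ) : Finset (ℤ × ℤ) :=
  Finset.Icc (-(2 * (N : ℤ)), -(2 * (N : ℤ))) (2 * (N : ℤ), 2 * (N : ℤ))

/-- `α_N = (1/2) Σ_{k ∈ K_{++}, N ≤ |k| ≤ 2N} a_τ²/|k|⁴`. -/
def alphaN (N : ℕ) (aτ : ℝ) : ℝ :=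
  (1 / 2) * ∑ k ∈ (latticeBox N).filter (fun k => 0 ≤ k.1 ∧ 0 < k.2), θcoef N aτ k ^ 2


section Aux

lemma knormSq_nonneg (k : ℤ × ℤ) : 0 ≤ knormSq k := by
  unfold knormSq; positivity

lemma knorm_sq_eq (k : ℤ × ℤ) : knorm k ^ 2 = knormSq k :=
  Real.sq_sqrt (knormSq_nonneg k)

lemma knormSq_neg (k : ℤ × ℤ) : knormSq (-k) = knormSq k := by
  simp [knormSq]

lemma knorm_neg' (k : ℤ × ℤ) : knorm (-k) = knorm k := by
  simp [knorm, knormSq_neg]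

lemma inAnnulus_neg (N : ℕ) (k : ℤ × ℤ) : inAnnulus N (-k) ↔ inAnnulus N k := by
  simp [inAnnulus, knorm_neg']

lemma θ_neg (N : ℕ) (aτ : ℝ) (k : ℤ × ℤ) : θcoef N aτ (-k) = θcoef N aτ k := by
  simp [θcoef, inAnnulus_neg, knorm_neg']

lemma kperp_neg (k : ℤ × ℤ) (i : Fin 2) : kperp (-k) i = -kperp k i := by
  fin_cases i <;> simp [kperp]

lemma kdot_neg (k : ℤ × ℤ) (x : Fin 2 → ℝ) : kdot (-k) x = -kdot k x := by
  simp [kdot]; ring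

lemma mem_box_neg {N : ℕ} {k : ℤ × ℤ} (h : k ∈ latticeBox N) : -k ∈ latticeBox N := by
  simp only [latticeBox, Finset.mem_Icc, Prod.le_def, Prod.fst_neg, Prod.snd_neg] at h ⊢
  omega

lemma KMinus_iff_KPlus_neg (k : ℤ × ℤ) : KMinus k ↔ KPlus (-k) := by
  simp only [KMinus, KPlus, Prod.fst_neg, Prod.snd_neg]
  omega

lemma KPlus_not_KMinus {k : ℤ × ℤ} (h : KPlus k) : ¬ KMinus k := by
  simp only [KMinus, KPlus] at *; omega

/-- rotation by -90 degrees: maps K_{++} to K_{+-} -/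
def krot (k : ℤ × ℤ) : ℤ × ℤ := (k.2, -k.1)

lemma knormSq_krot (k : ℤ × ℤ) : knormSq (krot k) = knormSq k := by
  simp [knormSq, krot]; ring

lemma knorm_krot (k : ℤ × ℤ) : knorm (krot k) = knorm k := by
  simp [knorm, knormSq_krot]

lemma θ_krot (N : ℕ) (aτ : ℝ) (k : ℤ × ℤ) : θcoef N aτ (krot k) = θcoef N aτ k := by
  simp [θcoef, inAnnulus, knorm_krot]
  congr

lemma kperp_krot (k : ℤ × ℤ) : kperp (krot k) = ![(k.1 : ℝ), (k.2 : ℝ)] := by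
  funext i; fin_cases i <;> simp [kperp, krot]

lemma mem_box_krot {N : ℕ} {k : ℤ × ℤ} (h : k ∈ latticeBox N) : krot k ∈ latticeBox N := by
  simp only [latticeBox, krot, Finset.mem_Icc, Prod.le_def] at h ⊢
  omega

lemma knorm_pos_of_pp {k : ℤ × ℤ} (h : 0 ≤ k.1 ∧ 0 < k.2) : 0 < knorm k := by
  apply Real.sqrt_pos.2
  have h2 : (1 : ℝ) ≤ (k.2 : ℝ) := by exact_mod_cast h.2
  have : (0:ℝ) ≤ (k.1:ℝ)^2 := sq_nonneg _
  unfold knormSq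
  nlinarith

end Aux

section Aux2

def krotinv (m : ℤ × ℤ) : ℤ × ℤ := (-m.2, m.1)

lemma krot_krotinv (m : ℤ × ℤ) : krot (krotinv m) = m := by
  simp [krot, krotinv]

lemma krotinv_krot (m : ℤ × ℤ) : krotinv (krot m) = m := by
  simp [krot, krotinv]

lemma mem_box_krotinv {N : ℕ} {k : ℤ × ℤ} (h : k ∈ latticeBox N) : krotinv k ∈ latticeBox N := by
  simp only [latticeBox, krotinv, Finset.mem_Icc, Prod.le_def] at h ⊢
  omega

end Aux2

lemma part1 (aτ : ℝ) (N : ℕ) (x : Fin 2 → ℝ) (i j : Fin 2) :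
    ∑ k ∈ latticeBox N, σcoef N aτ k x i * σcoef N aτ k x j
      = 2 * alphaN N aτ * (if i = j then 1 else 0) := by
  classical
  set B := latticeBox N with hB
  set f : ℤ × ℤ → ℝ := fun k => σcoef N aτ k x i * σcoef N aτ k x j with hf
  set g : ℤ × ℤ → ℝ := fun k =>
    (θcoef N aτ k * Real.sin (kdot k x) / knorm k * kperp k i)
      * (θcoef N aτ k * Real.sin (kdot k x) / knorm k * kperp k j) with hg
  set G : ℤ × ℤ → ℝ := fun k =>
    θcoef N aτ k ^ 2 / knorm k ^ 2 * (kperp k i * kperp k j) with hG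
  set G' : ℤ × ℤ → ℝ := fun k =>
    θcoef N aτ k ^ 2 / knorm k ^ 2
      * (![(k.1 : ℝ), (k.2 : ℝ)] i * ![(k.1 : ℝ), (k.2 : ℝ)] j) with hG'
  have step1 : ∑ k ∈ B, f k
      = ∑ k ∈ B.filter (fun k => KPlus k), f k
        + ∑ k ∈ B.filter (fun k => ¬ KPlus k), f k :=
    (Finset.sum_filter_add_sum_filter_not B _ f).symm
  have step2 : ∑ k ∈ B.filter (fun k => ¬ KPlus k), f k
      = ∑ k ∈ B.filter (fun k => KMinus k), f k := by
    refine (Finset.sum_subset ?_ ?_).symm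
    · intro k hk
      simp only [Finset.mem_filter] at hk ⊢
      exact ⟨hk.1, fun hp => KPlus_not_KMinus hp hk.2⟩
    · intro k hk hnk
      simp only [Finset.mem_filter] at hk hnk
      have h1 : ¬ KPlus k := hk.2
      have h2 : ¬ KMinus k := fun h => hnk ⟨hk.1, h⟩
      simp [hf, σcoef, h1, h2]
  have step3 : ∑ k ∈ B.filter (fun k => KMinus k), f k
      = ∑ k ∈ B.filter (fun k => KPlus k), g k := by
    refine Finset.sum_nbij' (fun k => -k) (fun k => -k) ?_ ?_ ?_ ?_ ?_
    · intro a ha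
      simp only [Finset.mem_filter] at ha ⊢
      exact ⟨mem_box_neg ha.1, (KMinus_iff_KPlus_neg a).1 ha.2⟩
    · intro a ha
      simp only [Finset.mem_filter] at ha ⊢
      refine ⟨mem_box_neg ha.1, ?_⟩
      rw [KMinus_iff_KPlus_neg, neg_neg]
      exact ha.2
    · intro a _; simp
    · intro a _; simp
    · intro a ha
      simp only [Finset.mem_filter] at ha
      have hm := ha.2
      have hnp : ¬ KPlus a := fun hp => KPlus_not_KMinus hp hm
      simp only [hf, hg, σcoef, if_neg hnp, if_pos hm, Pi.smul_apply, smul_eq_mul,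
        θ_neg, kdot_neg, knorm_neg', kperp_neg, Real.sin_neg]
      ring
  have step4 : ∑ k ∈ B.filter (fun k => KPlus k), (f k + g k)
      = ∑ k ∈ B.filter (fun k => KPlus k), G k := by
    refine Finset.sum_congr rfl ?_
    intro k hk
    simp only [Finset.mem_filter] at hk
    have hp := hk.2
    have hs := Real.sin_sq_add_cos_sq (kdot k x)
    simp only [hf, hg, hG, σcoef, if_pos hp, Pi.smul_apply, smul_eq_mul]
    linear_combination (θcoef N aτ k ^ 2 / knorm k ^ 2 * (kperp k i * kperp k j)) * hs
  have e1 : (B.filter (fun k => KPlus k)).filter (fun k => 0 ≤ k.1 ∧ 0 < k.2)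
      = B.filter (fun k => 0 ≤ k.1 ∧ 0 < k.2) := by
    ext k
    simp only [Finset.mem_filter]
    constructor
    · rintro ⟨⟨hb, _⟩, hp⟩; exact ⟨hb, hp⟩
    · rintro ⟨hb, hp⟩; exact ⟨⟨hb, Or.inl hp⟩, hp⟩
  have e2 : (B.filter (fun k => KPlus k)).filter (fun k => ¬ (0 ≤ k.1 ∧ 0 < k.2))
      = B.filter (fun k => 0 < k.1 ∧ k.2 ≤ 0) := by
    ext k
    simp only [Finset.mem_filter]
    constructor
    · rintro ⟨⟨hb, hpl⟩, hnp⟩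
      rcases hpl with h | h
      · exact absurd h hnp
      · exact ⟨hb, h⟩
    · rintro ⟨hb, hq⟩
      exact ⟨⟨hb, Or.inr hq⟩, fun hp => by omega⟩
  have step5 : ∑ k ∈ B.filter (fun k => KPlus k), G k
      = ∑ k ∈ B.filter (fun k => 0 ≤ k.1 ∧ 0 < k.2), G k
        + ∑ k ∈ B.filter (fun k => 0 < k.1 ∧ k.2 ≤ 0), G k := by
    rw [← Finset.sum_filter_add_sum_filter_not (B.filter (fun k => KPlus k))
      (fun k => 0 ≤ k.1 ∧ 0 < k.2) G, e1, e2]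
  have hGrot : ∀ m : ℤ × ℤ, G (krot m) = G' m := by
    intro m
    simp only [hG, hG', θ_krot, knorm_krot, kperp_krot]
  have step6 : ∑ k ∈ B.filter (fun k => 0 < k.1 ∧ k.2 ≤ 0), G k
      = ∑ k ∈ B.filter (fun k => 0 ≤ k.1 ∧ 0 < k.2), G' k := by
    refine Finset.sum_nbij' krotinv krot ?_ ?_ ?_ ?_ ?_
    · intro a ha
      simp only [Finset.mem_filter] at ha ⊢
      exact ⟨mem_box_krotinv ha.1, by simp only [krotinv]; omega⟩
    · intro a ha
      simp only [Finset.mem_filter] at ha ⊢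
      exact ⟨mem_box_krot ha.1, by simp only [krot]; omega⟩
    · intro a _; exact krot_krotinv a
    · intro a _; exact krotinv_krot a
    · intro a _
      rw [← hGrot (krotinv a), krot_krotinv]
  have step7 : ∑ k ∈ B.filter (fun k => 0 ≤ k.1 ∧ 0 < k.2), (G k + G' k)
      = ∑ k ∈ B.filter (fun k => 0 ≤ k.1 ∧ 0 < k.2),
          θcoef N aτ k ^ 2 * (if i = j then 1 else 0) := by
    refine Finset.sum_congr rfl ?_
    intro k hk
    simp only [Finset.mem_filter] at hk
    have hkn : 0 < knorm k := knorm_pos_of_pp hk.2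
    have hsq : knormSq k ≠ 0 := by
      rw [← knorm_sq_eq]; positivity
    rw [knormSq] at hsq
    have hsq2 : ((k.2 : ℝ)) ^ 2 + ((k.1 : ℝ)) ^ 2 ≠ 0 := by
      rw [add_comm]; exact hsq
    simp only [hG, hG']
    rw [knorm_sq_eq k]
    fin_cases i <;> fin_cases j <;>
      simp only [kperp, knormSq, Matrix.cons_val_zero, Matrix.cons_val_one, Matrix.head_cons] <;>
      norm_num <;>
      first
        | ring1
        | linear_combination θcoef N aτ k ^ 2 * mul_inv_cancel₀ hsq
        | linear_combination θcoef N aτ k ^ 2 * mul_inv_cancel₀ hsq2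
  calc ∑ k ∈ B, f k
      = ∑ k ∈ B.filter (fun k => KPlus k), f k
        + ∑ k ∈ B.filter (fun k => KPlus k), g k := by rw [step1, step2, step3]
    _ = ∑ k ∈ B.filter (fun k => KPlus k), (f k + g k) := by
        rw [Finset.sum_add_distrib]
    _ = ∑ k ∈ B.filter (fun k => 0 ≤ k.1 ∧ 0 < k.2), G k
        + ∑ k ∈ B.filter (fun k => 0 < k.1 ∧ k.2 ≤ 0), G k := by rw [step4, step5]
    _ = ∑ k ∈ B.filter (fun k => 0 ≤ k.1 ∧ 0 < k.2), (G k + G' k) := by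
        rw [step6, Finset.sum_add_distrib]
    _ = ∑ k ∈ B.filter (fun k => 0 ≤ k.1 ∧ 0 < k.2),
          θcoef N aτ k ^ 2 * (if i = j then 1 else 0) := step7
    _ = 2 * alphaN N aτ * (if i = j then 1 else 0) := by
        rw [← Finset.sum_mul, alphaN]
        ring

lemma box_card (N : ℕ) : (latticeBox N).card = (4 * N + 1) * (4 * N + 1) := by
  rw [latticeBox, Finset.card_Icc_prod]
  have h1 : (2 * (N : ℤ) + 1 - -(2 * (N : ℤ))).toNat = 4 * N + 1 := by omega
  simp only [Int.card_Icc]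
  rw [h1]

lemma part2 (aτ : ℝ) (haτ : 0 < aτ) :
    Filter.Tendsto (fun N : ℕ => alphaN N aτ) Filter.atTop (nhds 0) := by
  apply squeeze_zero' (g := fun N : ℕ => 25 * aτ ^ 2 / (N : ℝ))
  · filter_upwards with N
    simp only [alphaN]
    positivity
  · filter_upwards [Filter.eventually_ge_atTop 1] with N hN
    have hn1 : (1 : ℝ) ≤ (N : ℝ) := by exact_mod_cast hN
    have hn0 : (0 : ℝ) < (N : ℝ) := by linarith
    set n : ℝ := (N : ℝ) with hn
    have hθ : ∀ k ∈ (latticeBox N).filter (fun k => 0 ≤ k.1 ∧ 0 < k.2),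
        θcoef N aτ k ^ 2 ≤ (aτ / n ^ 2) ^ 2 := by
      intro k _
      have h0 : 0 ≤ θcoef N aτ k ∧ θcoef N aτ k ≤ aτ / n ^ 2 := by
        rw [θcoef]
        split_ifs with h
        · refine ⟨div_nonneg haτ.le (sq_nonneg _), ?_⟩
          have hk2 : n ^ 2 ≤ knorm k ^ 2 := by
            have := h.1
            nlinarith
          exact div_le_div_of_nonneg_left haτ.le (by positivity) hk2
        · exact ⟨le_refl 0, by positivity⟩
      nlinarith [h0.1, h0.2]
    have hsum := Finset.sum_le_card_nsmul
      ((latticeBox N).filter (fun k => 0 ≤ k.1 ∧ 0 < k.2)) _ ((aτ / n ^ 2) ^ 2) hθ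
    have hcard : ((((latticeBox N).filter (fun k => 0 ≤ k.1 ∧ 0 < k.2)).card : ℝ))
        ≤ 25 * n ^ 2 := by
      have h1 : ((latticeBox N).filter (fun k => 0 ≤ k.1 ∧ 0 < k.2)).card
          ≤ (latticeBox N).card := Finset.card_filter_le _ _
      have h2 : ((latticeBox N).card : ℝ) = (4 * n + 1) * (4 * n + 1) := by
        rw [box_card]; push_cast; ring
      have h3 : (((latticeBox N).filter (fun k => 0 ≤ k.1 ∧ 0 < k.2)).card : ℝ)
          ≤ ((latticeBox N).card : ℝ) := by exact_mod_cast h1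
      rw [h2] at h3
      nlinarith
    have key : ∑ k ∈ (latticeBox N).filter (fun k => 0 ≤ k.1 ∧ 0 < k.2), θcoef N aτ k ^ 2
        ≤ 25 * n ^ 2 * (aτ / n ^ 2) ^ 2 := by
      refine hsum.trans ?_
      rw [nsmul_eq_mul]
      exact mul_le_mul_of_nonneg_right hcard (by positivity)
    simp only [alphaN]
    have hfin : (1 / 2 : ℝ) * (25 * n ^ 2 * (aτ / n ^ 2) ^ 2) ≤ 25 * aτ ^ 2 / n := by
      have hne : n ≠ 0 := ne_of_gt hn0
      rw [div_pow, show (1 / 2 : ℝ) * (25 * n ^ 2 * (aτ ^ 2 / (n ^ 2) ^ 2))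
        = 25 * aτ ^ 2 / (2 * n ^ 2) from by field_simp,
        div_le_div_iff₀ (by positivity) (by positivity)]
      have hx : n ≤ 2 * n ^ 2 := by nlinarith
      nlinarith [mul_le_mul_of_nonneg_left hx (by positivity : (0:ℝ) ≤ 25 * aτ ^ 2)]
    calc (1 / 2 : ℝ) * ∑ k ∈ (latticeBox N).filter (fun k => 0 ≤ k.1 ∧ 0 < k.2),
          θcoef N aτ k ^ 2
        ≤ (1 / 2 : ℝ) * (25 * n ^ 2 * (aτ / n ^ 2) ^ 2) := by linarith [key]
      _ ≤ 25 * aτ ^ 2 / n := hfin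
  · exact tendsto_const_div_atTop_nhds_zero_nat _

/-- The spatial covariance of the noise is isotropic:
`Σ_{k∈K} σ_k(x) ⊗ σ_k(x) = 2 α_N I` for every `x ∈ ℝ²`, and `α_N → 0` as `N → ∞`. -/
theorem noise_spatial_covariance (aτ : ℝ) (haτ : 0 < aτ) :
    (∀ N : ℕ, 1 ≤ N → ∀ x : Fin 2 → ℝ, ∀ i j : Fin 2,
      ∑ k ∈ latticeBox N, σcoef N aτ k x i * σcoef N aτ k x j
        = 2 * alphaN N aτ * (if i = j then 1 else 0))
    ∧ Tendsto (fun N : ℕ => alphaN N aτ) atTop (nhds 0) := by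
  exact ⟨fun N _ x i j => part1 aτ N x i j, part2 aτ haτ⟩
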